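/- Let 0 < r ≤ R and h = √(R² − r²), and for t ∈ ℝ let P(t) = (r·cos t, r·sin t, h) ∈ ℝ³, so that each P(t) lies on the sphere of radius R centred at the origin. Then for every θ ∈ [0, 2π], the great-circle (spherical) distance between P(0) and P(θ), namely R·arccos(⟨P(0), P(θ)⟩ / R²), equals 2R·arcsin((r/R)·sin(θ/2)). In particular, for the circle of circumference ℓ (so r = ℓ/2π) roundly embedded on a sphere of radius R with relative curvature κ = ℓ²/(4π²R²), the subspace metric between two points at arc-length distance x along the circle is D_{ℓ,κ}(x) = (ℓ/(√κ·π))·arcsin(√κ·sin(πx/ℓ)). -/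

import Mathlib

lemma arccos_one_sub_two_sq (a : ℝ) (h0 : 0 ≤ a) (h1 : a ≤ 1) :
    Real.arccos (1 - 2 * a ^ 2) = 2 * Real.arcsin a := by
  have hs : Real.sin (Real.arcsin a) = a := Real.sin_arcsin (by linarith) h1
  have hc : Real.cos (2 * Real.arcsin a) = 1 - 2 * a ^ 2 := by
    rw [Real.cos_two_mul]
    have := Real.sin_sq_add_cos_sq (Real.arcsin a)
    nlinarith
  rw [← hc, Real.arccos_cos]
  · nlinarith [Real.arcsin_nonneg.2 h0]
  · nlinarith [Real.arcsin_le_pi_div_two a]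

/-- A circle of radius `r` embedded roundly on the sphere of radius `R ≥ r` centred at the
origin of `ℝ³`, as the locus `P t = (r cos t, r sin t, h)` with `h = √(R² − r²)`.  Each
`P t` lies on the sphere, and for `θ ∈ [0, 2π]` the great-circle distance
`R · arccos(⟨P 0, P θ⟩ / R²)` between `P 0` and `P θ` equals `2R · arcsin((r/R) sin(θ/2))`.
In particular, if `ℓ = 2πr` is the circumference and `κ = ℓ²/(4π²R²)` the relative
curvature, then for `x ∈ [0, ℓ]` the spherical distance between two points at arc-length
distance `x` along the circle is `(ℓ/(√κ·π)) · arcsin(√κ · sin(πx/ℓ))`. -/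
theorem spherical_circle_metric (r R h : ℝ) (hr : 0 < r) (hrR : r ≤ R)
    (hh : h = Real.sqrt (R ^ 2 - r ^ 2))
    (P : ℝ → Fin 3 → ℝ)
    (hP : ∀ t, P t = ![r * Real.cos t, r * Real.sin t, h]) :
    (∀ t, (P t 0) ^ 2 + (P t 1) ^ 2 + (P t 2) ^ 2 = R ^ 2) ∧
    (∀ θ ∈ Set.Icc (0 : ℝ) (2 * Real.pi),
      R * Real.arccos ((P 0 0 * P θ 0 + P 0 1 * P θ 1 + P 0 2 * P θ 2) / R ^ 2)
        = 2 * R * Real.arcsin ((r / R) * Real.sin (θ / 2))) ∧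
    (∀ ℓ κ : ℝ, ℓ = 2 * Real.pi * r → κ = ℓ ^ 2 / (4 * Real.pi ^ 2 * R ^ 2) →
      ∀ x ∈ Set.Icc (0 : ℝ) ℓ,
        R * Real.arccos
            ((P 0 0 * P (2 * Real.pi * x / ℓ) 0 + P 0 1 * P (2 * Real.pi * x / ℓ) 1
              + P 0 2 * P (2 * Real.pi * x / ℓ) 2) / R ^ 2)
          = (ℓ / (Real.sqrt κ * Real.pi)) *
              Real.arcsin (Real.sqrt κ * Real.sin (Real.pi * x / ℓ))) := by
  have hR : 0 < R := lt_of_lt_of_le hr hrR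
  have hh2 : h ^ 2 = R ^ 2 - r ^ 2 := by
    rw [hh, Real.sq_sqrt (by nlinarith)]
  have key : ∀ θ ∈ Set.Icc (0 : ℝ) (2 * Real.pi),
      R * Real.arccos ((P 0 0 * P θ 0 + P 0 1 * P θ 1 + P 0 2 * P θ 2) / R ^ 2)
        = 2 * R * Real.arcsin ((r / R) * Real.sin (θ / 2)) := by
    intro θ hθ
    obtain ⟨hθ0, hθ2⟩ := hθ
    have hsin : 0 ≤ Real.sin (θ / 2) :=
      Real.sin_nonneg_of_nonneg_of_le_pi (by linarith) (by linarith)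
    set a := (r / R) * Real.sin (θ / 2) with ha
    have ha0 : 0 ≤ a := mul_nonneg (by positivity) hsin
    have ha1 : a ≤ 1 := by
      have h1 : r / R ≤ 1 := (div_le_one hR).2 hrR
      have h2 : Real.sin (θ / 2) ≤ 1 := Real.sin_le_one _
      nlinarith
    have hcos : Real.cos θ = 1 - 2 * Real.sin (θ / 2) ^ 2 := by
      have h1 : Real.cos (2 * (θ / 2)) = 2 * Real.cos (θ / 2) ^ 2 - 1 :=
        Real.cos_two_mul _
      have h2 := Real.sin_sq_add_cos_sq (θ / 2)
      have : (2 : ℝ) * (θ / 2) = θ := by ring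
      rw [this] at h1
      nlinarith
    have hinner : (P 0 0 * P θ 0 + P 0 1 * P θ 1 + P 0 2 * P θ 2) / R ^ 2
        = 1 - 2 * a ^ 2 := by
      simp only [hP]
      simp [Matrix.cons_val_zero, Matrix.cons_val_one]
      field_simp [ha]
      rw [ha, hcos, hh2]
      field_simp
      ring
    rw [hinner, arccos_one_sub_two_sq a ha0 ha1]
    ring
  refine ⟨?_, key, ?_⟩
  · intro t
    simp only [hP]
    simp [Matrix.cons_val_zero, Matrix.cons_val_one]
    have := Real.sin_sq_add_cos_sq t
    nlinarith
  · intro ℓ κ hℓ hκ x hx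
    have hπ : 0 < Real.pi := Real.pi_pos
    have hℓ0 : 0 < ℓ := by rw [hℓ]; positivity
    have hκs : Real.sqrt κ = r / R := by
      rw [hκ, hℓ]
      rw [show (2 * Real.pi * r) ^ 2 / (4 * Real.pi ^ 2 * R ^ 2) = (r / R) ^ 2 by
        field_simp; ring]
      exact Real.sqrt_sq (by positivity)
    have hθmem : 2 * Real.pi * x / ℓ ∈ Set.Icc (0 : ℝ) (2 * Real.pi) := by
      obtain ⟨hx0, hx1⟩ := hx
      constructor
      · positivity
      · rw [div_le_iff₀ hℓ0]; nlinarith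
    have h2 := key _ hθmem
    rw [h2]
    have hhalf : 2 * Real.pi * x / ℓ / 2 = Real.pi * x / ℓ := by ring
    rw [hhalf, hκs]
    have : ℓ / (r / R * Real.pi) = 2 * R := by
      rw [hℓ]; field_simp
    rw [this]
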